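/- Liminf inequality with varying right-hand sides: In the two-norm Setting with Assumption (A4) (Assumptions (A1) and (A5) are not needed), let g_n, g ∈ Y* with g_n converging weakly to g in Y*, and set f_n = g_n∘j ∈ X* and f = g∘j ∈ X*. Then for every x ∈ X and every sequence (x_n) converging weakly to x in X, F^f(x) ≤ liminf_{n→∞} F_n^{f_n}(x_n); in particular, if γ(x) ≠ 0 then liminf_{n→∞} F_n^{f_n}(x_n) = ∞. -/

import Mathlib

open Filter Topology
open scoped Classical

/-- Weak convergence of a sequence in a normed space: convergence tested against
every continuous linear functional. -/
def WeakTendsto {X : Type*} [NormedAddCommGroup X] [NormedSpace ℝ X]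
    (u : ℕ → X) (x : X) : Prop :=
  ∀ φ : X →L[ℝ] ℝ, Tendsto (fun n => φ (u n)) atTop (𝓝 (φ x))

/-- **Liminf inequality with varying right-hand sides.**
In the two-norm Deep Ritz setting with Assumption (A4), if `g n ⇀ g₀` weakly in
`Y*` and `f n = g n ∘ j`, `f₀ = g₀ ∘ j`, then for every sequence `(u n)`
converging weakly to `x` in `X` one has
`F f₀ x ≤ liminf Fn (f n) n (u n)`; in particular the liminf is `∞` whenever
`γ x ≠ 0`. -/
theorem deep_ritz_liminf_varying_rhs
    {X B Y : Type*} [NormedAddCommGroup X] [NormedSpace ℝ X] [CompleteSpace X]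
    [NormedAddCommGroup B] [NormedSpace ℝ B] [CompleteSpace B]
    [NormedAddCommGroup Y] [NormedSpace ℝ Y] [CompleteSpace Y]
    (hXrefl : Function.Surjective (NormedSpace.inclusionInDoubleDual ℝ X))
    (hBrefl : Function.Surjective (NormedSpace.inclusionInDoubleDual ℝ B))
    (hYrefl : Function.Surjective (NormedSpace.inclusionInDoubleDual ℝ Y))
    (γ : X →L[ℝ] B)
    (E : X → ℝ)
    -- E is bounded from below
    (hEbdd : ∃ m : ℝ, ∀ x : X, m ≤ E x)
    -- E is (sequentially) lower semicontinuous w.r.t. the weak topology of X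
    (hElsc : ∀ (x : X) (u : ℕ → X), WeakTendsto u x →
      ((E x : EReal)) ≤ liminf (fun n => ((E (u n) : EReal))) atTop)
    -- E is continuous w.r.t. the norm topology of X
    (hEcont : Continuous E)
    (p : ℝ) (hp : 1 < p)
    (lam : ℕ → ℝ) (hlam_pos : ∀ n, 0 < lam n) (hlam : Tendsto lam atTop atTop)
    (A : ℕ → Set X)
    -- the penalized functionals with right-hand side f
    (Fn : (X →L[ℝ] ℝ) → ℕ → X → EReal)
    (hFn : ∀ (f : X →L[ℝ] ℝ) (n : ℕ) (x : X), Fn f n x =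
      if x ∈ A n then ((E x + lam n * ‖γ x‖ ^ p - f x : ℝ) : EReal) else ⊤)
    -- the limit functionals with right-hand side f
    (F : (X →L[ℝ] ℝ) → X → EReal)
    (hF : ∀ (f : X →L[ℝ] ℝ) (x : X),
      F f x = if γ x = 0 then ((E x - f x : ℝ) : EReal) else ⊤)
    -- the second norm, encoded by an injective dense-range embedding j : X → Y
    (j : X →L[ℝ] Y) (hj_inj : Function.Injective j) (hj_dense : DenseRange j)
    -- Assumption (A4): j is completely continuous
    (hA4 : ∀ (u : ℕ → X) (x : X), WeakTendsto u x →
      Tendsto (fun n => j (u n)) atTop (𝓝 (j x)))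
    -- weakly convergent right-hand sides
    (g : ℕ → (Y →L[ℝ] ℝ)) (g₀ : Y →L[ℝ] ℝ)
    (hg : ∀ y : Y, Tendsto (fun n => g n y) atTop (𝓝 (g₀ y))) :
    -- liminf inequality
    (∀ (x : X) (u : ℕ → X), WeakTendsto u x →
        F (g₀.comp j) x ≤ liminf (fun n => Fn ((g n).comp j) n (u n)) atTop) ∧
      -- divergence at points violating the constraint
      (∀ (x : X) (u : ℕ → X), WeakTendsto u x → γ x ≠ 0 →
        liminf (fun n => Fn ((g n).comp j) n (u n)) atTop = ⊤) := by
  classical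
  obtain ⟨m, hm⟩ := hEbdd
  -- uniform bound on the g n via Banach–Steinhaus
  obtain ⟨C, hC⟩ : ∃ C, ∀ n, ‖g n‖ ≤ C := by
    apply banach_steinhaus
    intro y
    obtain ⟨c, hc⟩ := ((hg y).norm).bddAbove_range
    exact ⟨c, fun n => hc (Set.mem_range_self n)⟩
  -- convergence of the pairings f n (u n) → f₀ x
  have hfconv : ∀ (x : X) (u : ℕ → X), WeakTendsto u x →
      Tendsto (fun n => (g n) (j (u n))) atTop (𝓝 (g₀ (j x))) := by
    intro x u hu
    have hjy : Tendsto (fun n => j (u n)) atTop (𝓝 (j x)) := hA4 u x hu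
    have hbound : ∀ n, |(g n) (j (u n)) - g₀ (j x)| ≤
        C * ‖j (u n) - j x‖ + |(g n) (j x) - g₀ (j x)| := by
      intro n
      have : (g n) (j (u n)) - g₀ (j x) =
          (g n) (j (u n) - j x) + ((g n) (j x) - g₀ (j x)) := by
        rw [map_sub]; ring
      rw [this]
      refine (abs_add_le _ _).trans (add_le_add ?_ le_rfl)
      calc |(g n) (j (u n) - j x)| ≤ ‖g n‖ * ‖j (u n) - j x‖ :=
            (g n).le_opNorm _
        _ ≤ C * ‖j (u n) - j x‖ :=
            mul_le_mul_of_nonneg_right (hC n) (norm_nonneg _)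
    have htend0 : Tendsto (fun n => C * ‖j (u n) - j x‖ +
        |(g n) (j x) - g₀ (j x)|) atTop (𝓝 0) := by
      have h1 : Tendsto (fun n => C * ‖j (u n) - j x‖) atTop (𝓝 0) := by
        have := (tendsto_sub_nhds_zero_iff.mpr hjy).norm
        simpa using this.const_mul C
      have h2 : Tendsto (fun n => |(g n) (j x) - g₀ (j x)|) atTop (𝓝 0) := by
        have := tendsto_sub_nhds_zero_iff.mpr (hg (j x))
        simpa using this.abs
      simpa using h1.add h2
    have : Tendsto (fun n => |(g n) (j (u n)) - g₀ (j x)|) atTop (𝓝 0) :=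
      squeeze_zero (fun n => abs_nonneg _) hbound htend0
    rw [tendsto_iff_dist_tendsto_zero]
    simpa [Real.dist_eq] using this
  -- the divergence statement
  have hdiv : ∀ (x : X) (u : ℕ → X), WeakTendsto u x → γ x ≠ 0 →
      liminf (fun n => Fn ((g n).comp j) n (u n)) atTop = ⊤ := by
    intro x u hu hγx
    obtain ⟨φ, hφ1, hφ2⟩ := exists_dual_vector ℝ (γ x) (norm_ne_zero_iff.mpr hγx)
    set c : ℝ := ‖γ x‖ / 2 with hc
    have hcpos : 0 < c := by
      have : 0 < ‖γ x‖ := norm_pos_iff.mpr hγx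
      positivity
    have hw : Tendsto (fun n => φ (γ (u n))) atTop (𝓝 ‖γ x‖) := by
      have := hu (φ.comp γ)
      simpa [ContinuousLinearMap.comp_apply, hφ2] using this
    have hev1 : ∀ᶠ n in atTop, c ≤ ‖γ (u n)‖ := by
      have hlt : c < ‖γ x‖ := by
        have : 0 < ‖γ x‖ := norm_pos_iff.mpr hγx
        rw [hc]; linarith
      filter_upwards [hw.eventually (eventually_gt_nhds hlt)] with n hn
      calc c ≤ φ (γ (u n)) := hn.le
        _ ≤ |φ (γ (u n))| := le_abs_self _
        _ ≤ ‖φ‖ * ‖γ (u n)‖ := φ.le_opNorm _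
        _ = ‖γ (u n)‖ := by rw [hφ1, one_mul]
    set K : ℝ := g₀ (j x) + 1 with hK
    have hKlt : g₀ (j x) < K := by rw [hK]; linarith
    have hev2 : ∀ᶠ n in atTop, (g n) (j (u n)) < K :=
      (hfconv x u hu).eventually (eventually_lt_nhds hKlt)
    have htop : Tendsto (fun n => Fn ((g n).comp j) n (u n)) atTop (𝓝 ⊤) := by
      rw [EReal.tendsto_nhds_top_iff_real]
      intro M
      have hcp : (0:ℝ) < c ^ p := Real.rpow_pos_of_pos hcpos p
      have hlamc : Tendsto (fun n => lam n * c ^ p) atTop atTop :=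
        hlam.atTop_mul_const hcp
      have hev3 : ∀ᶠ n in atTop, M - m + K ≤ lam n * c ^ p :=
        hlamc.eventually_ge_atTop _
      filter_upwards [hev1, hev2, hev3] with n h1 h2 h3
      rw [hFn]
      split
      · rw [EReal.coe_lt_coe_iff]
        have hEn : m ≤ E (u n) := hm (u n)
        have hpow : lam n * c ^ p ≤ lam n * ‖γ (u n)‖ ^ p := by
          apply mul_le_mul_of_nonneg_left _ (hlam_pos n).le
          exact Real.rpow_le_rpow hcpos.le h1 (by linarith)
        have : ((g n).comp j) (u n) = (g n) (j (u n)) := rfl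
        rw [this]
        nlinarith
      · exact EReal.coe_lt_top M
    exact htop.liminf_eq
  refine ⟨?_, hdiv⟩
  intro x u hu
  by_cases hγx : γ x = 0
  · rw [hF, if_pos hγx]
    have hf₀ : (g₀.comp j) x = g₀ (j x) := rfl
    have hfc : Tendsto (fun n => (g n) (j (u n))) atTop (𝓝 (g₀ (j x))) :=
      hfconv x u hu
    -- pointwise lower bound
    have key : ∀ n, ((fun k => (E (u k) : EReal)) + fun k => ((-(g k) (j (u k)) : ℝ) : EReal)) n
        ≤ Fn ((g n).comp j) n (u n) := by
      intro n
      simp only [Pi.add_apply]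
      rw [hFn]
      split
      · rw [← EReal.coe_add, EReal.coe_le_coe_iff]
        have hpow : 0 ≤ lam n * ‖γ (u n)‖ ^ p :=
          mul_nonneg (hlam_pos n).le (Real.rpow_nonneg (norm_nonneg _) p)
        have : ((g n).comp j) (u n) = (g n) (j (u n)) := rfl
        rw [this]
        linarith
      · exact le_top
    have h1 : (E x : EReal) ≤ liminf (fun n => ((E (u n) : EReal))) atTop :=
      hElsc x u hu
    have h2 : liminf (fun n => ((-(g n) (j (u n)) : ℝ) : EReal)) atTop
        = ((-g₀ (j x) : ℝ) : EReal) :=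
      (EReal.tendsto_coe.mpr hfc.neg).liminf_eq
    calc ((E x - (g₀.comp j) x : ℝ) : EReal)
        = (E x : EReal) + ((-g₀ (j x) : ℝ) : EReal) := by
          rw [hf₀]; push_cast; rw [sub_eq_add_neg]
      _ ≤ liminf (fun n => ((E (u n) : EReal))) atTop
          + liminf (fun n => ((-(g n) (j (u n)) : ℝ) : EReal)) atTop := by
          rw [h2]; exact add_le_add h1 le_rfl
      _ ≤ liminf ((fun k => (E (u k) : EReal)) + fun k => ((-(g k) (j (u k)) : ℝ) : EReal))
            atTop := EReal.le_liminf_add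
      _ ≤ liminf (fun n => Fn ((g n).comp j) n (u n)) atTop :=
          liminf_le_liminf (Eventually.of_forall key)
  · rw [hF, if_neg hγx, hdiv x u hu hγx]
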